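/- Let m be a positive integer and let α₁, α₂ be positive irrational real numbers with 1/α₁ + 1/α₂ = m. Then every positive integer N appears exactly m times in the multiset union S(α₁,0) ∪ S(α₂,0); that is, r_{α₁,0}(N) + r_{α₂,0}(N) = m for every integer N ≥ 1. -/

import Mathlib

lemma floor_add_floor_irr (x y : ℝ) (hx : Irrational x) (hy : Irrational y) (k : ℤ)
    (hk : x + y = (k : ℝ)) : ⌊x⌋ + ⌊y⌋ = k - 1 := by
  have fx : 0 < Int.fract x := (Int.fract_pos).mpr (fun h => hx ⟨⌊x⌋, h.symm⟩)
  have fy : 0 < Int.fract y := (Int.fract_pos).mpr (fun h => hy ⟨⌊y⌋, h.symm⟩)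
  have fx1 : Int.fract x < 1 := Int.fract_lt_one x
  have fy1 : Int.fract y < 1 := Int.fract_lt_one y
  have hxe : x = ⌊x⌋ + Int.fract x := (Int.floor_add_fract x).symm
  have hye : y = ⌊y⌋ + Int.fract y := (Int.floor_add_fract y).symm
  have h0 : (0 : ℝ) < ((k - (⌊x⌋ + ⌊y⌋) : ℤ) : ℝ) := by push_cast; nlinarith [hk]
  have h2 : (((k - (⌊x⌋ + ⌊y⌋) : ℤ)) : ℝ) < 2 := by push_cast; nlinarith [hk]
  have h0' : 0 < k - (⌊x⌋ + ⌊y⌋) := by exact_mod_cast h0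
  have h2' : k - (⌊x⌋ + ⌊y⌋) < 2 := by exact_mod_cast h2
  omega

lemma count_eq (α : ℝ) (h : 0 < α) (hi : Irrational α) (N : ℤ) (hN : 1 ≤ N) :
    Nat.card {n : ℕ // 0 < n ∧ ⌊(n : ℝ) * α + 0⌋ = N}
      = ⌊((N : ℝ) + 1)/α⌋.toNat - ⌊(N : ℝ)/α⌋.toNat := by
  have hNpos : (0:ℝ) < (N:ℝ) := by exact_mod_cast hN.trans_lt' (by norm_num)
  have hirr : ∀ M : ℤ, M ≠ 0 → Irrational ((M:ℝ)/α) := by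
    intro M hM
    simpa [div_eq_mul_inv] using (hi.inv.intCast_mul hM)
  have hfl : (⌊(N : ℝ)/α⌋.toNat : ℤ) = ⌊(N : ℝ)/α⌋ := by
    rw [Int.toNat_of_nonneg]
    exact Int.floor_nonneg.mpr (le_of_lt (div_pos hNpos h))
  have hfl2 : (⌊((N : ℝ) + 1)/α⌋.toNat : ℤ) = ⌊((N : ℝ) + 1)/α⌋ := by
    rw [Int.toNat_of_nonneg]
    exact Int.floor_nonneg.mpr (le_of_lt (div_pos (by linarith) h))
  have key : ∀ n : ℕ, (0 < n ∧ ⌊(n : ℝ) * α + 0⌋ = N) ↔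
      n ∈ Set.Ioc ⌊(N : ℝ)/α⌋.toNat ⌊((N : ℝ) + 1)/α⌋.toNat := by
    intro n
    simp only [Set.mem_Ioc]
    constructor
    · rintro ⟨hn, hfn⟩
      rw [add_zero] at hfn
      have hmul : Irrational ((n : ℝ) * α) := by
        have := hi.intCast_mul (show (n:ℤ) ≠ 0 by exact_mod_cast hn.ne')
        simpa using this
      have h1 : (N:ℝ) ≤ (n:ℝ) * α := hfn ▸ Int.floor_le _
      have h1' : (N:ℝ) < (n:ℝ) * α := h1.lt_of_ne (fun he => hmul ⟨N, he⟩)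
      have h2 : (n:ℝ) * α < (N:ℝ) + 1 := by
        have := Int.lt_floor_add_one ((n:ℝ) * α)
        rw [hfn] at this; exact_mod_cast this
      constructor
      · have : ⌊(N : ℝ)/α⌋ < (n:ℤ) := Int.floor_lt.mpr (by
          rw [div_lt_iff₀ h]; push_cast; linarith)
        omega
      · have : (n:ℤ) ≤ ⌊((N : ℝ) + 1)/α⌋ := Int.le_floor.mpr (by
          rw [le_div_iff₀ h]; push_cast; linarith)
        omega
    · rintro ⟨ha, hb⟩
      have hn : 0 < n := by omega
      have ha' : ⌊(N : ℝ)/α⌋ < (n:ℤ) := by omega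
      have hb' : (n:ℤ) ≤ ⌊((N : ℝ) + 1)/α⌋ := by omega
      have h1 : (N:ℝ)/α < (n:ℝ) := by exact_mod_cast Int.floor_lt.mp ha'
      have h2 : (n:ℝ) ≤ ((N:ℝ)+1)/α := by exact_mod_cast Int.le_floor.mp hb'
      have h2' : (n:ℝ) < ((N:ℝ)+1)/α :=
        h2.lt_of_ne (fun he => (hirr (N+1) (by omega)) ⟨n, by push_cast; linarith [he]⟩)
      refine ⟨hn, ?_⟩
      rw [add_zero, Int.floor_eq_iff]
      constructor
      · rw [div_lt_iff₀ h] at h1; push_cast at h1 ⊢; linarith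
      · rw [lt_div_iff₀ h] at h2'; push_cast at h2' ⊢; linarith
  have e : {n : ℕ // 0 < n ∧ ⌊(n : ℝ) * α + 0⌋ = N} ≃
    (Set.Ioc ⌊(N : ℝ)/α⌋.toNat ⌊((N : ℝ) + 1)/α⌋.toNat) := Equiv.subtypeEquivRight key
  rw [Nat.card_congr e, ← Finset.coe_Ioc]
  simp [Nat.card_eq_finsetCard, Nat.card_Ioc]

/-- The number of positive integers `n` with `⌊n·α + β⌋ = N`, i.e. the multiplicity
of `N` in the Beatty sequence `S(α,β)`. -/
noncomputable def beattyCount (α β : ℝ) (N : ℤ) : ℕ :=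
  Nat.card {n : ℕ // 0 < n ∧ ⌊(n : ℝ) * α + β⌋ = N}

theorem homogeneous_pair_exact_mcover (m : ℕ) (hm : 0 < m) (α₁ α₂ : ℝ)
    (h1 : 0 < α₁) (h2 : 0 < α₂) (hi1 : Irrational α₁) (hi2 : Irrational α₂)
    (hsum : 1 / α₁ + 1 / α₂ = (m : ℝ)) :
    ∀ N : ℤ, 1 ≤ N → beattyCount α₁ 0 N + beattyCount α₂ 0 N = m := by
  intro N hN
  have hc1 : beattyCount α₁ 0 N = ⌊((N : ℝ) + 1)/α₁⌋.toNat - ⌊(N : ℝ)/α₁⌋.toNat :=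
    count_eq α₁ h1 hi1 N hN
  have hc2 : beattyCount α₂ 0 N = ⌊((N : ℝ) + 1)/α₂⌋.toNat - ⌊(N : ℝ)/α₂⌋.toNat :=
    count_eq α₂ h2 hi2 N hN
  have hirr : ∀ (α : ℝ), Irrational α → 0 < α → ∀ M : ℤ, M ≠ 0 → Irrational ((M:ℝ)/α) := by
    intro α hα hαpos M hM
    simpa [div_eq_mul_inv] using (hα.inv.intCast_mul hM)
  have hsum1 : (N:ℝ)/α₁ + (N:ℝ)/α₂ = ((N * m : ℤ) : ℝ) := by
    push_cast
    field_simp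
    field_simp at hsum
    linear_combination hsum
  have hsum2 : (((N+1:ℤ)):ℝ)/α₁ + (((N+1:ℤ)):ℝ)/α₂ = (((N+1) * m : ℤ) : ℝ) := by
    push_cast
    field_simp
    field_simp at hsum
    linear_combination hsum
  have hA : ⌊(N:ℝ)/α₁⌋ + ⌊(N:ℝ)/α₂⌋ = N * m - 1 :=
    floor_add_floor_irr _ _ (hirr α₁ hi1 h1 N (by omega)) (hirr α₂ hi2 h2 N (by omega)) _ hsum1
  have hB0 := floor_add_floor_irr _ _ (hirr α₁ hi1 h1 (N+1) (by omega)) (hirr α₂ hi2 h2 (N+1) (by omega)) _ hsum2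
  have hB : ⌊((N:ℝ)+1)/α₁⌋ + ⌊((N:ℝ)+1)/α₂⌋ = N * m + m - 1 := by
    push_cast at hB0; rw [hB0]; ring
  have hm1 : ⌊(N:ℝ)/α₁⌋ ≤ ⌊((N:ℝ)+1)/α₁⌋ :=
    Int.floor_le_floor (by gcongr; linarith)
  have hm2 : ⌊(N:ℝ)/α₂⌋ ≤ ⌊((N:ℝ)+1)/α₂⌋ :=
    Int.floor_le_floor (by gcongr; linarith)
  have hp1 : 0 ≤ ⌊(N:ℝ)/α₁⌋ := Int.floor_nonneg.mpr
    (div_nonneg (by exact_mod_cast (by omega : (0:ℤ) ≤ N)) h1.le)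
  have hp2 : 0 ≤ ⌊(N:ℝ)/α₂⌋ := Int.floor_nonneg.mpr
    (div_nonneg (by exact_mod_cast (by omega : (0:ℤ) ≤ N)) h2.le)
  rw [hc1, hc2]
  omega
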